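/- Let M be a full positive definite integral lattice on a quadratic space (V, q) over ℚ with an automorphism σ of prime order p ≠ 2, let V₀ be the fixed space of σ and m₀ = dim V₀. Then for every integer n > m₀ and every positive definite symmetric n × n integer matrix S, the representation number A(M,S) = #{(x₁,…,x_n) ∈ M^n : b(x_i,x_j) = S_{ij}} is divisible by p. (The degree-n theta series of M for n > m₀ is singular modulo p.) -/

import Mathlib

/-- Let `M` be a full positive definite integral lattice on a quadratic space `(V, q)` over `ℚ`
with an automorphism `σ` of prime order `p ≠ 2`, let `V₀` be the fixed space of `σ` and
`m₀ = dim V₀`.  Then for every integer `n > m₀` and every positive definite symmetric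
`n × n` integer matrix `S`, the representation number
`A(M, S) = #{(x₁, …, x_n) ∈ M^n : b (xᵢ) (xⱼ) = Sᵢⱼ}` is divisible by `p`
(with `b = QuadraticMap.polar q`); i.e. the degree-`n` theta series of `M` for `n > m₀`
is singular modulo `p`. -/
theorem theta_series_singular_mod_p_above_fixed_rank
    (V : Type*) [AddCommGroup V] [Module ℚ V] [FiniteDimensional ℚ V]
    (q : QuadraticForm ℚ V) (hqpos : ∀ v : V, v ≠ 0 → 0 < q v)
    (p : ℕ) (hp : p.Prime) (hodd : Odd p)
    (σ : V ≃ₗ[ℚ] V) (hσq : ∀ v : V, q (σ v) = q v) (hσp : σ ^ p = 1)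
    (M : Submodule ℤ V) (hMfg : M.FG) (hMfull : Submodule.span ℚ (M : Set V) = ⊤)
    (hMint : ∀ x ∈ M, ∃ n : ℤ, q x = (n : ℚ))
    (hσM : ∀ x ∈ M, σ x ∈ M)
    (V₀ : Submodule ℚ V) (hV₀ : ∀ v : V, v ∈ V₀ ↔ σ v = v)
    (m₀ : ℕ) (hm₀ : m₀ = Module.finrank ℚ V₀)
    (n : ℕ) (hn : n > m₀)
    (S : Matrix (Fin n) (Fin n) ℤ) (hSsymm : S.IsSymm)
    (hSpos : (S.map ((↑) : ℤ → ℚ)).PosDef) :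
    p ∣ Nat.card {x : Fin n → V // (∀ i, x i ∈ M) ∧
        ∀ i j, QuadraticMap.polar q (x i) (x j) = (S i j : ℚ)} := by
  classical
  set α := {x : Fin n → V // (∀ i, x i ∈ M) ∧
      ∀ i j, QuadraticMap.polar q (x i) (x j) = (S i j : ℚ)} with hαdef
  -- σ preserves the polar form
  have hpolar : ∀ a b : V, QuadraticMap.polar q (σ a) (σ b) = QuadraticMap.polar q a b := by
    intro a b
    simp [QuadraticMap.polar, ← map_add, hσq]
  -- componentwise application of σ maps α to itself
  let f : α → α := fun x => ⟨fun i => σ (x.1 i),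
    fun i => hσM _ (x.2.1 i), fun i j => (hpolar _ _).trans (x.2.2 i j)⟩
  have hiter : ∀ (k : ℕ) (x : α) (i : Fin n), (f^[k] x).1 i = (σ ^ k) (x.1 i) := by
    intro k
    induction k with
    | zero => intro x i; simp
    | succ k ih =>
      intro x i
      rw [Function.iterate_succ_apply, ih, pow_succ]
      rfl
  have hfp : ∀ x : α, f^[p] x = x := by
    intro x
    apply Subtype.ext
    funext i
    rw [hiter, hσp]
    rfl
  -- the corresponding permutation of α
  have hp1 : p - 1 + 1 = p := Nat.succ_pred_eq_of_pos hp.pos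
  let e : Equiv.Perm α :=
    ⟨f, f^[p - 1],
      fun x => by
        have h := hfp x
        rw [← hp1, Function.iterate_succ_apply] at h
        exact h,
      fun x => by
        have h := hfp x
        rw [← hp1, Function.iterate_succ_apply'] at h
        exact h⟩
  have hep : e ^ p = 1 := by
    refine Equiv.Perm.ext fun x => ?_
    rw [Equiv.Perm.coe_pow]
    exact hfp x
  -- ⟨e⟩ is a p-group
  haveI : Fact p.Prime := ⟨hp⟩
  have hPG : IsPGroup p (Subgroup.zpowers e) := by
    intro g
    refine ⟨1, ?_⟩
    obtain ⟨m, hm⟩ := g.2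
    apply Subtype.ext
    have : ((g : Equiv.Perm α)) ^ (p ^ 1) = 1 := by
      rw [← hm, pow_one, ← zpow_natCast, ← zpow_mul, mul_comm, zpow_mul, zpow_natCast, hep,
        one_zpow]
    simpa using this
  -- no fixed points
  haveI hempty : IsEmpty (MulAction.fixedPoints (Subgroup.zpowers e) α) := by
    refine ⟨fun y => ?_⟩
    obtain ⟨x, hx⟩ := y
    have hex : f x = x := hx ⟨e, Subgroup.mem_zpowers e⟩
    have hfix : ∀ i, σ (x.1 i) = x.1 i := fun i =>
      congrFun (congrArg Subtype.val hex) i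
    -- the components lie in V₀, which has dimension m₀ < n
    have hxV0 : ∀ i, x.1 i ∈ V₀ := fun i => (hV₀ _).2 (hfix i)
    let y : Fin n → V₀ := fun i => ⟨x.1 i, hxV0 i⟩
    have hnli : ¬ LinearIndependent ℚ y := by
      intro h
      have := h.fintype_card_le_finrank
      rw [Fintype.card_fin] at this
      omega
    obtain ⟨c, hsum, i₀, hc₀⟩ := Fintype.not_linearIndependent_iff.mp hnli
    have hsumV : ∑ i, c i • x.1 i = 0 := by
      have := congrArg (Subtype.val) hsum
      simpa using this
    have hrow : ∀ j, ∑ i, c i * (S i j : ℚ) = 0 := by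
      intro j
      have h0 : QuadraticMap.polarBilin q (∑ i, c i • x.1 i) (x.1 j) = 0 := by
        rw [hsumV]; simp
      simpa [map_sum, LinearMap.sum_apply, map_smul, LinearMap.smul_apply,
        QuadraticMap.polarBilin_apply_apply, x.2.2, smul_eq_mul] using h0
    have hcne : c ≠ 0 := fun h => hc₀ (by rw [h]; rfl)
    have hpos := hSpos.dotProduct_mulVec_pos hcne
    have hmv : Matrix.mulVec (S.map ((↑) : ℤ → ℚ)) c = 0 := by
      funext j
      simp only [Matrix.mulVec, dotProduct, Matrix.map_apply, Pi.zero_apply]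
      calc ∑ i, (S j i : ℚ) * c i = ∑ i, c i * (S i j : ℚ) := by
            refine Finset.sum_congr rfl fun i _ => ?_
            rw [mul_comm]
            norm_cast
            rw [hSsymm.apply j i]
        _ = 0 := hrow j
    rw [hmv] at hpos
    simp at hpos
  -- conclude by the p-group fixed point counting theorem
  cases finite_or_infinite α with
  | inl hfin =>
    have hmod := hPG.card_modEq_card_fixedPoints α
    have h0 : Nat.card (MulAction.fixedPoints (Subgroup.zpowers e) α) = 0 :=
      Nat.card_of_isEmpty
    rw [h0] at hmod
    exact (Nat.modEq_zero_iff_dvd).mp hmod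
  | inr hinf =>
    rw [Nat.card_eq_zero_of_infinite]
    exact dvd_zero p
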